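/- Let l ≥ 3 and n = 2^l − 1. Then dil(S_n, XT_l) = l − 1: every bijection from the vertices of the star S_n to the vertices of the X-tree XT_l has some edge of S_n whose endpoint images are at distance at least l − 1 in XT_l, and there exists a bijection under which every edge of S_n maps to a pair of vertices at distance at most l − 1 in XT_l. -/

import Mathlib

open SimpleGraph

/-- Star graph `K_{1,n-1}` on `Fin n`, centre `0`. -/
def starGraph (n : ℕ) : SimpleGraph (Fin n) where
  Adj x y := x ≠ y ∧ (x.val = 0 ∨ y.val = 0)
  symm := by constructor; rintro x y ⟨h1, h2⟩; exact ⟨h1.symm, by tauto⟩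
  loopless := by constructor; rintro x ⟨h1, -⟩; exact h1 rfl

/-- Adjacency of X-tree labels: binary tree edges plus edges between consecutive
labels on the same level (the level of label `a` is `Nat.log 2 a + 1`). -/
def xtAdjLbl (a b : ℕ) : Prop :=
  (b = 2 * a ∨ b = 2 * a + 1 ∨ a = 2 * b ∨ a = 2 * b + 1) ∨
  (b = a + 1 ∧ Nat.log 2 a = Nat.log 2 b) ∨ (a = b + 1 ∧ Nat.log 2 a = Nat.log 2 b)

/-- The X-tree `XT_l` on `Fin (2^l - 1)`; vertex `x` has label `x+1`. -/
def xTree (l : ℕ) : SimpleGraph (Fin (2 ^ l - 1)) where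
  Adj x y := xtAdjLbl (x.val + 1) (y.val + 1)
  symm := by
    constructor
    rintro x y (h | ⟨h1, h2⟩ | ⟨h1, h2⟩)
    · left; tauto
    · right; right; exact ⟨h1, h2.symm⟩
    · right; left; exact ⟨h1, h2.symm⟩
  loopless := by
    constructor
    rintro x (h | ⟨h1, -⟩ | ⟨h1, -⟩) <;> omega

def gfun (p : ℕ) : ℕ :=
  if p = 0 then 0 else if p = 1 then 1
  else 2 * Nat.log 2 p + (if 3 * 2 ^ Nat.log 2 p ≤ 2 * p then 1 else 0)

lemma gfun_of_ge (p : ℕ) (hp : 2 ≤ p) :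
    gfun p = 2 * Nat.log 2 p + (if 3 * 2 ^ Nat.log 2 p ≤ 2 * p then 1 else 0) := by
  rw [gfun, if_neg (by omega), if_neg (by omega)]

lemma gfun_succ (p : ℕ) : gfun p ≤ gfun (p + 1) ∧ gfun (p + 1) ≤ gfun p + 1 := by
  rcases Nat.lt_or_ge p 2 with hp | hp
  · have e2 : Nat.log 2 2 = 1 := Nat.log_eq_of_pow_le_of_lt_pow (by norm_num) (by norm_num)
    interval_cases p <;> simp [gfun, e2]
  · have hj1 : 2 ^ Nat.log 2 p ≤ p := Nat.pow_log_le_self 2 (by omega)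
    have hj2 : p < 2 ^ (Nat.log 2 p + 1) := Nat.lt_pow_succ_log_self (by norm_num) p
    have hgp := gfun_of_ge p hp
    rcases Nat.lt_or_ge (p + 1) (2 ^ (Nat.log 2 p + 1)) with h | h
    · have hlog : Nat.log 2 (p + 1) = Nat.log 2 p :=
        Nat.log_eq_of_pow_le_of_lt_pow (by omega) h
      have hgp1 := gfun_of_ge (p + 1) (by omega)
      rw [hlog] at hgp1
      rw [hgp, hgp1]
      split_ifs <;> omega
    · have hpe : p + 1 = 2 ^ (Nat.log 2 p + 1) := by omega
      have hlog : Nat.log 2 (p + 1) = Nat.log 2 p + 1 := by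
        rw [hpe, Nat.log_pow (by norm_num)]
      have hj3 : 2 ≤ 2 ^ Nat.log 2 p := by
        have h1 : 1 ≤ Nat.log 2 p := by
          by_contra hc
          have : Nat.log 2 p = 0 := by omega
          rw [this] at hj2; simp at hj2; omega
        calc 2 = 2 ^ 1 := rfl
        _ ≤ 2 ^ Nat.log 2 p := Nat.pow_le_pow_right (by norm_num) h1
      have h2 : 2 ^ (Nat.log 2 p + 1) = 2 * 2 ^ Nat.log 2 p := by ring
      have hgp1 := gfun_of_ge (p + 1) (by omega)
      rw [hlog] at hgp1
      rw [hgp, hgp1]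
      have hif1 : (if 3 * 2 ^ Nat.log 2 p ≤ 2 * p then (1:ℕ) else 0) = 1 := by
        rw [if_pos]; omega
      have hif2 : (if 3 * 2 ^ (Nat.log 2 p + 1) ≤ 2 * (p + 1) then (1:ℕ) else 0) = 0 := by
        rw [if_neg]; omega
      omega

lemma gfun_double (p : ℕ) :
    (gfun p ≤ gfun (2 * p) ∧ gfun (2 * p) ≤ gfun p + 2) ∧
    (gfun p ≤ gfun (2 * p + 1) ∧ gfun (2 * p + 1) ≤ gfun p + 2) := by
  rcases Nat.lt_or_ge p 2 with hp | hp
  · have e2 : Nat.log 2 2 = 1 := Nat.log_eq_of_pow_le_of_lt_pow (by norm_num) (by norm_num)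
    have e3 : Nat.log 2 3 = 1 := Nat.log_eq_of_pow_le_of_lt_pow (by norm_num) (by norm_num)
    interval_cases p <;> simp [gfun, e2, e3]
  · have hj1 : 2 ^ Nat.log 2 p ≤ p := Nat.pow_log_le_self 2 (by omega)
    have hj2 : p < 2 ^ (Nat.log 2 p + 1) := Nat.lt_pow_succ_log_self (by norm_num) p
    have h2 : 2 ^ (Nat.log 2 p + 1) = 2 * 2 ^ Nat.log 2 p := by ring
    have h4 : 2 ^ (Nat.log 2 p + 1 + 1) = 4 * 2 ^ Nat.log 2 p := by ring
    have h1 : 1 ≤ Nat.log 2 p := by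
      by_contra hc
      have : Nat.log 2 p = 0 := by omega
      rw [this] at hj2; simp at hj2; omega
    have hj3 : 2 ≤ 2 ^ Nat.log 2 p := by
      calc 2 = 2 ^ 1 := rfl
      _ ≤ 2 ^ Nat.log 2 p := Nat.pow_le_pow_right (by norm_num) h1
    obtain ⟨q, hq⟩ : ∃ q, 2 ^ Nat.log 2 p = 2 * q := by
      refine ⟨2 ^ (Nat.log 2 p - 1), ?_⟩
      rw [← pow_succ']
      congr 1
      omega
    have hlog1 : Nat.log 2 (2 * p) = Nat.log 2 p + 1 :=
      Nat.log_eq_of_pow_le_of_lt_pow (by omega) (by omega)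
    have hlog2 : Nat.log 2 (2 * p + 1) = Nat.log 2 p + 1 :=
      Nat.log_eq_of_pow_le_of_lt_pow (by omega) (by omega)
    have hgp := gfun_of_ge p hp
    have hg1 := gfun_of_ge (2 * p) (by omega)
    have hg2 := gfun_of_ge (2 * p + 1) (by omega)
    rw [hlog1] at hg1
    rw [hlog2] at hg2
    have e1 : (if 3 * 2 ^ (Nat.log 2 p + 1) ≤ 2 * (2 * p) then 1 else 0)
        = (if 3 * 2 ^ Nat.log 2 p ≤ 2 * p then (1:ℕ) else 0) := by
      rw [h2]; split_ifs <;> omega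
    have e2 : (if 3 * 2 ^ (Nat.log 2 p + 1) ≤ 2 * (2 * p + 1) then 1 else 0)
        = (if 3 * 2 ^ Nat.log 2 p ≤ 2 * p then (1:ℕ) else 0) := by
      rw [h2]; split_ifs <;> omega
    rw [hgp, hg1, hg2, e1, e2]; omega
def phiF (l a : ℕ) : ℕ := (l - 1 - Nat.log 2 a) + gfun (a - 2 ^ Nat.log 2 a)

lemma phiF_child (l a c : ℕ) (ha : 1 ≤ a) (hc : c = 2 * a ∨ c = 2 * a + 1)
    (hcl : c < 2 ^ l) : phiF l c ≤ phiF l a + 1 ∧ phiF l a ≤ phiF l c + 1 := by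
  have hj1 : 2 ^ Nat.log 2 a ≤ a := Nat.pow_log_le_self 2 (by omega)
  have hj2 : a < 2 ^ (Nat.log 2 a + 1) := Nat.lt_pow_succ_log_self (by norm_num) a
  have h2 : 2 ^ (Nat.log 2 a + 1) = 2 * 2 ^ Nat.log 2 a := by ring
  have h4 : 2 ^ (Nat.log 2 a + 1 + 1) = 4 * 2 ^ Nat.log 2 a := by ring
  have hlogc : Nat.log 2 c = Nat.log 2 a + 1 :=
    Nat.log_eq_of_pow_le_of_lt_pow (by omega) (by omega)
  have hlt : Nat.log 2 c < l := (Nat.log_lt_iff_lt_pow (by norm_num) (by omega)).2 hcl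
  have hg := gfun_double (a - 2 ^ Nat.log 2 a)
  have hposc : c - 2 ^ Nat.log 2 c = 2 * (a - 2 ^ Nat.log 2 a)
      ∨ c - 2 ^ Nat.log 2 c = 2 * (a - 2 ^ Nat.log 2 a) + 1 := by
    rw [hlogc]; omega
  unfold phiF
  rcases hposc with h | h <;> rw [h, hlogc] <;> omega

lemma phiF_horiz (l a : ℕ) (ha : 1 ≤ a) (hlog : Nat.log 2 a = Nat.log 2 (a + 1)) :
    phiF l (a + 1) ≤ phiF l a + 1 ∧ phiF l a ≤ phiF l (a + 1) + 1 := by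
  have hj1 : 2 ^ Nat.log 2 a ≤ a := Nat.pow_log_le_self 2 (by omega)
  have hg := gfun_succ (a - 2 ^ Nat.log 2 a)
  have hpos : a + 1 - 2 ^ Nat.log 2 (a + 1) = (a - 2 ^ Nat.log 2 a) + 1 := by
    rw [← hlog]; omega
  unfold phiF
  rw [hpos, ← hlog]
  omega

lemma phiF_lip (l a b : ℕ) (ha : 1 ≤ a) (hal : a < 2 ^ l) (hb : 1 ≤ b) (hbl : b < 2 ^ l)
    (h : xtAdjLbl a b) : phiF l b ≤ phiF l a + 1 := by
  rcases h with (h | h | h | h) | ⟨h1, h2⟩ | ⟨h1, h2⟩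
  · exact (phiF_child l a b ha (Or.inl h) hbl).1
  · exact (phiF_child l a b ha (Or.inr h) hbl).1
  · exact (phiF_child l b a hb (Or.inl h) hal).2
  · exact (phiF_child l b a hb (Or.inr h) hal).2
  · subst h1; exact (phiF_horiz l a ha h2).1
  · subst h1; exact (phiF_horiz l b hb h2.symm).2

lemma phiF_walk (l : ℕ) {x y : Fin (2 ^ l - 1)} (p : (xTree l).Walk x y) :
    phiF l (y.val + 1) ≤ phiF l (x.val + 1) + p.length := by
  induction p with
  | nil => simp
  | @cons u v w huv p ih =>
    have h2l : (0 : ℕ) < 2 ^ l := pow_pos (by norm_num) l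
    have hu : u.val < 2 ^ l - 1 := u.isLt
    have hv : v.val < 2 ^ l - 1 := v.isLt
    have hlip := phiF_lip l (u.val + 1) (v.val + 1) (by omega) (by omega) (by omega)
      (by omega) huv
    simp only [SimpleGraph.Walk.length_cons]
    omega

lemma phiF_dist (l : ℕ) {x y : Fin (2 ^ l - 1)} (h : (xTree l).Reachable x y) :
    phiF l (y.val + 1) ≤ phiF l (x.val + 1) + (xTree l).dist x y := by
  obtain ⟨p, hp⟩ := h.exists_walk_length_eq_dist
  rw [← hp]
  exact phiF_walk l p

lemma exists_walk_root (l : ℕ) (r : Fin (2 ^ l - 1)) (hr : r.val = 0) :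
    ∀ m (x : Fin (2 ^ l - 1)), x.val = m →
      ∃ p : (xTree l).Walk x r, p.length = Nat.log 2 (x.val + 1) := by
  intro m
  induction m using Nat.strong_induction_on with
  | _ m ih =>
    intro x hx
    by_cases h0 : x.val = 0
    · have hxr : x = r := Fin.ext (by omega)
      subst hxr
      exact ⟨SimpleGraph.Walk.nil, by simp [hr]⟩
    · have h2l : (0:ℕ) < 2 ^ l := pow_pos (by norm_num) l
      have hxl := x.isLt
      set a := x.val + 1 with hadef
      have ha2 : 2 ≤ a := by omega
      have hy : a / 2 - 1 < 2 ^ l - 1 := by omega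
      let y : Fin (2 ^ l - 1) := ⟨a / 2 - 1, hy⟩
      have hyv : y.val + 1 = a / 2 := by
        show a / 2 - 1 + 1 = a / 2
        omega
      have hadj : (xTree l).Adj x y := by
        show xtAdjLbl (x.val + 1) (y.val + 1)
        rw [hyv, ← hadef]
        exact Or.inl (by omega)
      obtain ⟨p, hp⟩ := ih (a / 2 - 1) (by omega) y rfl
      refine ⟨SimpleGraph.Walk.cons hadj p, ?_⟩
      have hlog : Nat.log 2 (a / 2) + 1 = Nat.log 2 a := by
        have h1 := Nat.log_div_base 2 a
        have hpos : 0 < Nat.log 2 a := Nat.log_pos (by norm_num) ha2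
        omega
      rw [SimpleGraph.Walk.length_cons, hp, hyv]
      exact hlog

theorem dil_star_xTree (l n : ℕ) (hl : 3 ≤ l) (hn : n = 2 ^ l - 1) :
    (∀ f : Fin n ≃ Fin (2 ^ l - 1), ∃ u v : Fin n, (_root_.starGraph n).Adj u v ∧
      l - 1 ≤ (xTree l).dist (f u) (f v)) ∧
    (∃ f : Fin n ≃ Fin (2 ^ l - 1), ∀ u v : Fin n, (_root_.starGraph n).Adj u v →
      (xTree l).dist (f u) (f v) ≤ l - 1) := by
  subst hn
  have h2l : (0:ℕ) < 2 ^ l := pow_pos (by norm_num) l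
  have h8 : 8 ≤ 2 ^ l := by
    calc (8:ℕ) = 2 ^ 3 := rfl
    _ ≤ 2 ^ l := Nat.pow_le_pow_right (by norm_num) hl
  have hr0 : (0:ℕ) < 2 ^ l - 1 := by omega
  let r : Fin (2 ^ l - 1) := ⟨0, hr0⟩
  have hreach : ∀ x : Fin (2 ^ l - 1), (xTree l).Reachable x r := by
    intro x
    obtain ⟨p, -⟩ := exists_walk_root l r rfl x.val x rfl
    exact ⟨p⟩
  have hd : 2 ^ (l - 1) * 2 = 2 ^ l := by
    rw [← pow_succ]; congr 1; omega
  have he : 2 ^ (l - 2) * 2 = 2 ^ (l - 1) := by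
    rw [← pow_succ]; congr 1; omega
  have hf : 2 ≤ 2 ^ (l - 2) := by
    calc (2:ℕ) = 2 ^ 1 := rfl
    _ ≤ 2 ^ (l - 2) := Nat.pow_le_pow_right (by norm_num) (by omega)
  have hpow : (0:ℕ) < 2 ^ (l - 2) := pow_pos (by norm_num) _
  constructor
  · intro f
    let L : Fin (2 ^ l - 1) := ⟨2 ^ (l - 1) - 1, by omega⟩
    let R : Fin (2 ^ l - 1) := ⟨2 ^ l - 2, by omega⟩
    have hLlbl : L.val + 1 = 2 ^ (l - 1) := by
      show 2 ^ (l - 1) - 1 + 1 = 2 ^ (l - 1)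
      omega
    have hRlbl : R.val + 1 = 2 ^ l - 1 := by
      show 2 ^ l - 2 + 1 = 2 ^ l - 1
      omega
    have hlogL : Nat.log 2 (2 ^ (l - 1)) = l - 1 := Nat.log_pow (by norm_num) _
    have hlogR : Nat.log 2 (2 ^ l - 1) = l - 1 :=
      Nat.log_eq_of_pow_le_of_lt_pow (by omega) (by rw [pow_succ]; omega)
    have hphiL : phiF l (L.val + 1) = 0 := by
      rw [hLlbl]; unfold phiF; rw [hlogL]
      simp [gfun]
    have hgR : gfun (2 ^ (l - 1) - 1) = 2 * (l - 2) + 1 := by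
      rw [gfun_of_ge _ (by omega)]
      have hlogp : Nat.log 2 (2 ^ (l - 1) - 1) = l - 2 :=
        Nat.log_eq_of_pow_le_of_lt_pow (by omega) (by rw [pow_succ]; omega)
      rw [hlogp, if_pos (by omega)]
    have hphiR : phiF l (R.val + 1) = 2 * l - 3 := by
      rw [hRlbl]; unfold phiF; rw [hlogR]
      have hpos : 2 ^ l - 1 - 2 ^ (l - 1) = 2 ^ (l - 1) - 1 := by omega
      rw [hpos, hgR]
      omega
    let z : Fin (2 ^ l - 1) := ⟨0, hr0⟩
    by_cases hc : l - 1 ≤ phiF l ((f z).val + 1)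
    · refine ⟨z, f.symm L, ⟨?_, Or.inl rfl⟩, ?_⟩
      · intro hzz
        rw [hzz] at hc
        rw [Equiv.apply_symm_apply, hphiL] at hc
        omega
      · rw [Equiv.apply_symm_apply]
        have hdist := phiF_dist l ((hreach L).trans (hreach (f z)).symm)
        rw [SimpleGraph.dist_comm]
        omega
    · refine ⟨z, f.symm R, ⟨?_, Or.inl rfl⟩, ?_⟩
      · intro hzz
        rw [hzz] at hc
        rw [Equiv.apply_symm_apply, hphiR] at hc
        omega
      · rw [Equiv.apply_symm_apply]
        have hdist := phiF_dist l ((hreach (f z)).trans (hreach R).symm)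
        omega
  · refine ⟨Equiv.refl _, ?_⟩
    rintro u v ⟨hne, h0⟩
    have hub : ∀ w : Fin (2 ^ l - 1), (xTree l).dist r w ≤ l - 1 := by
      intro w
      obtain ⟨p, hp⟩ := exists_walk_root l r rfl w.val w rfl
      have h1 := SimpleGraph.dist_le p
      have hlog : Nat.log 2 (w.val + 1) ≤ l - 1 := by
        have hw := w.isLt
        have h2 : Nat.log 2 (w.val + 1) < l :=
          (Nat.log_lt_iff_lt_pow (by norm_num) (by omega)).2 (by omega)
        omega
      rw [SimpleGraph.dist_comm]
      omega
    simp only [Equiv.refl_apply]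
    rcases h0 with h0 | h0
    · have hu : u = r := Fin.ext h0
      rw [hu]
      exact hub v
    · have hv : v = r := Fin.ext h0
      rw [hv, SimpleGraph.dist_comm]
      exact hub u
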